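/- In the field ℚ(x_1,x_2) of rational functions in two variables over ℚ, the following identity holds: (x_1 − x_2) · 1/((1−x_1)^2(1−x_2)^2(1−x_1^2)(1−x_2^2)(1−x_1x_2)^2(1−x_1^2x_2)(1−x_1x_2^2)) = x_1·h(x_1, x_1x_2) − x_2·h(x_2, x_1x_2), where h(v_1,v_2) = (v_1^3 h_3(v_2) + v_1^2 h_2(v_2) + v_1 h_1(v_2) + h_0(v_2)) / ((1−v_1)^3(1+v_1)(1−v_1v_2)(1−v_2)^7(1+v_2)^4(1+v_2^2)), with h_3(v_2) = v_2^2(v_2^4 − v_2^3 + 3v_2^2 − v_2 + 1), h_2(v_2) = v_2(2v_2^4 − 4v_2^3 + v_2^2 − v_2 − 1), h_1(v_2) = v_2(−v_2^4 − v_2^3 + v_2^2 − 4v_2 + 2), h_0(v_2) = v_2^4 − v_2^3 + 3v_2^2 − v_2 + 1. (This expresses that h is the multiplicity series M' of the Hilbert series of the mixed trace algebra T_{32} of two generic 3×3 matrices.) -/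
import Mathlib


/-- The candidate multiplicity series `M'(H(T₃₂); v₁, v₂)` of the Hilbert series of
the mixed trace algebra of two generic `3×3` matrices. -/
noncomputable def multSeriesT32 (v1 v2 : FractionRing (MvPolynomial (Fin 2) ℚ)) :
    FractionRing (MvPolynomial (Fin 2) ℚ) :=
  (v1 ^ 3 * (v2 ^ 2 * (v2 ^ 4 - v2 ^ 3 + 3 * v2 ^ 2 - v2 + 1)) +
      v1 ^ 2 * (v2 * (2 * v2 ^ 4 - 4 * v2 ^ 3 + v2 ^ 2 - v2 - 1)) +
      v1 * (v2 * (-v2 ^ 4 - v2 ^ 3 + v2 ^ 2 - 4 * v2 + 2)) +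
      (v2 ^ 4 - v2 ^ 3 + 3 * v2 ^ 2 - v2 + 1)) /
    ((1 - v1) ^ 3 * (1 + v1) * (1 - v1 * v2) * (1 - v2) ^ 7 * (1 + v2) ^ 4 *
      (1 + v2 ^ 2))

lemma algebraMap_ne_zero_of_eval (p : MvPolynomial (Fin 2) ℚ)
    (h : MvPolynomial.eval (fun _ => (0 : ℚ)) p ≠ 0) :
    algebraMap (MvPolynomial (Fin 2) ℚ) (FractionRing (MvPolynomial (Fin 2) ℚ)) p ≠ 0 := by
  intro h0
  apply h
  have hp : p = 0 := IsFractionRing.injective (MvPolynomial (Fin 2) ℚ)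
    (FractionRing (MvPolynomial (Fin 2) ℚ)) (by simpa using h0)
  simp [hp]

set_option maxHeartbeats 4000000 in
/-- In `ℚ(x₁,x₂)` one has
`(x₁−x₂)/((1−x₁)²(1−x₂)²(1−x₁²)(1−x₂²)(1−x₁x₂)²(1−x₁²x₂)(1−x₁x₂²)) =
  x₁·h(x₁,x₁x₂) − x₂·h(x₂,x₁x₂)`
where `h = multSeriesT32` is the multiplicity series of the Hilbert series of the
mixed trace algebra `T₃₂` of two generic `3×3` matrices. -/
theorem multiplicity_series_T32
    (x1 x2 : FractionRing (MvPolynomial (Fin 2) ℚ))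
    (hx1 : x1 = algebraMap (MvPolynomial (Fin 2) ℚ) _ (MvPolynomial.X 0))
    (hx2 : x2 = algebraMap (MvPolynomial (Fin 2) ℚ) _ (MvPolynomial.X 1)) :
    (x1 - x2) *
        (1 / ((1 - x1) ^ 2 * (1 - x2) ^ 2 * (1 - x1 ^ 2) * (1 - x2 ^ 2) *
          (1 - x1 * x2) ^ 2 * (1 - x1 ^ 2 * x2) * (1 - x1 * x2 ^ 2))) =
      x1 * multSeriesT32 x1 (x1 * x2) - x2 * multSeriesT32 x2 (x1 * x2) := by
  have h1 : (1 : FractionRing (MvPolynomial (Fin 2) ℚ)) - x1 ≠ 0 := by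
    have h := algebraMap_ne_zero_of_eval (1 - MvPolynomial.X 0) (by simp)
    rw [map_sub, map_one] at h
    rw [hx1]
    exact h
  have h2 : (1 : FractionRing (MvPolynomial (Fin 2) ℚ)) + x1 ≠ 0 := by
    have h := algebraMap_ne_zero_of_eval (1 + MvPolynomial.X 0) (by simp)
    rw [map_add, map_one] at h
    rw [hx1]
    exact h
  have h3 : (1 : FractionRing (MvPolynomial (Fin 2) ℚ)) - x2 ≠ 0 := by
    have h := algebraMap_ne_zero_of_eval (1 - MvPolynomial.X 1) (by simp)
    rw [map_sub, map_one] at h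
    rw [hx2]
    exact h
  have h4 : (1 : FractionRing (MvPolynomial (Fin 2) ℚ)) + x2 ≠ 0 := by
    have h := algebraMap_ne_zero_of_eval (1 + MvPolynomial.X 1) (by simp)
    rw [map_add, map_one] at h
    rw [hx2]
    exact h
  have h5 : (1 : FractionRing (MvPolynomial (Fin 2) ℚ)) - x1 * x2 ≠ 0 := by
    have h := algebraMap_ne_zero_of_eval (1 - MvPolynomial.X 0 * MvPolynomial.X 1) (by simp)
    rw [map_sub, map_one, map_mul] at h
    rw [hx1, hx2]
    exact h
  have h6 : (1 : FractionRing (MvPolynomial (Fin 2) ℚ)) + x1 * x2 ≠ 0 := by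
    have h := algebraMap_ne_zero_of_eval (1 + MvPolynomial.X 0 * MvPolynomial.X 1) (by simp)
    rw [map_add, map_one, map_mul] at h
    rw [hx1, hx2]
    exact h
  have h7 : (1 : FractionRing (MvPolynomial (Fin 2) ℚ)) - x1 ^ 2 * x2 ≠ 0 := by
    have h := algebraMap_ne_zero_of_eval (1 - MvPolynomial.X 0 ^ 2 * MvPolynomial.X 1) (by simp)
    rw [map_sub, map_one, map_mul, map_pow] at h
    rw [hx1, hx2]
    exact h
  have h8 : (1 : FractionRing (MvPolynomial (Fin 2) ℚ)) - x1 * x2 ^ 2 ≠ 0 := by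
    have h := algebraMap_ne_zero_of_eval (1 - MvPolynomial.X 0 * MvPolynomial.X 1 ^ 2) (by simp)
    rw [map_sub, map_one, map_mul, map_pow] at h
    rw [hx1, hx2]
    exact h
  have h9 : (1 : FractionRing (MvPolynomial (Fin 2) ℚ)) + (x1 * x2) ^ 2 ≠ 0 := by
    have h := algebraMap_ne_zero_of_eval (1 + (MvPolynomial.X 0 * MvPolynomial.X 1) ^ 2) (by simp)
    rw [map_add, map_one, map_pow, map_mul] at h
    rw [hx1, hx2]
    exact h
  clear hx1 hx2
  have e1 : (1 : FractionRing (MvPolynomial (Fin 2) ℚ)) - x1 ^ 2 = (1 - x1) * (1 + x1) := by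
    ring
  have e2 : (1 : FractionRing (MvPolynomial (Fin 2) ℚ)) - x2 ^ 2 = (1 - x2) * (1 + x2) := by
    ring
  have e3 : (1 : FractionRing (MvPolynomial (Fin 2) ℚ)) - x1 * (x1 * x2) =
      1 - x1 ^ 2 * x2 := by ring
  have e4 : (1 : FractionRing (MvPolynomial (Fin 2) ℚ)) - x2 * (x1 * x2) =
      1 - x1 * x2 ^ 2 := by ring
  have hD0 : (1 - x1) ^ 2 * (1 - x2) ^ 2 * ((1 - x1) * (1 + x1)) * ((1 - x2) * (1 + x2)) *
      (1 - x1 * x2) ^ 2 * (1 - x1 ^ 2 * x2) * (1 - x1 * x2 ^ 2) ≠ 0 :=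
    mul_ne_zero (mul_ne_zero (mul_ne_zero (mul_ne_zero (mul_ne_zero (mul_ne_zero
      (pow_ne_zero _ h1) (pow_ne_zero _ h3)) (mul_ne_zero h1 h2)) (mul_ne_zero h3 h4))
      (pow_ne_zero _ h5)) h7) h8
  have hD1 : (1 - x1) ^ 3 * (1 + x1) * (1 - x1 ^ 2 * x2) * (1 - x1 * x2) ^ 7 *
      (1 + x1 * x2) ^ 4 * (1 + (x1 * x2) ^ 2) ≠ 0 :=
    mul_ne_zero (mul_ne_zero (mul_ne_zero (mul_ne_zero (mul_ne_zero
      (pow_ne_zero _ h1) h2) h7) (pow_ne_zero _ h5)) (pow_ne_zero _ h6)) h9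
  have hD2 : (1 - x2) ^ 3 * (1 + x2) * (1 - x1 * x2 ^ 2) * (1 - x1 * x2) ^ 7 *
      (1 + x1 * x2) ^ 4 * (1 + (x1 * x2) ^ 2) ≠ 0 :=
    mul_ne_zero (mul_ne_zero (mul_ne_zero (mul_ne_zero (mul_ne_zero
      (pow_ne_zero _ h3) h4) h8) (pow_ne_zero _ h5)) (pow_ne_zero _ h6)) h9
  rw [multSeriesT32, multSeriesT32, e1, e2, e3, e4, mul_one_div, ← mul_div_assoc, ← mul_div_assoc,
    div_sub_div _ _ hD1 hD2, div_eq_div_iff hD0 (mul_ne_zero hD1 hD2)]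
  ring
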